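/- If C ∈ B¹(α,β), then the scaled operator (1/β)C belongs to B³(β²/α), i.e., E‖(1/β)C(x) − x‖² ≤ (1 − α/β²)‖x‖² for all x. -/

import Mathlib

open MeasureTheory

/-- If `C ∈ B¹(α,β)`, then `(1/β)C ∈ B³(β²/α)`, i.e.
`E‖(1/β)C(x) − x‖² ≤ (1 − α/β²)‖x‖²` for all `x`. -/
theorem stmt2 {d : ℕ} {Ω : Type*} [MeasurableSpace Ω]
    (μ : Measure Ω) [IsProbabilityMeasure μ]
    (C : EuclideanSpace ℝ (Fin d) → Ω → EuclideanSpace ℝ (Fin d))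
    (α β : ℝ) (hα : 0 < α) (hβ : 0 < β)
    (hintC : ∀ x, Integrable (C x) μ)
    (hintC2 : ∀ x, Integrable (fun ω => ‖C x ω‖ ^ 2) μ)
    (hB : ∀ x, α * ‖x‖ ^ 2 ≤ ∫ ω, ‖C x ω‖ ^ 2 ∂μ ∧
      ∫ ω, ‖C x ω‖ ^ 2 ∂μ ≤ β * (inner ℝ (∫ ω, C x ω ∂μ) x : ℝ)) :
    ∀ x, ∫ ω, ‖(1 / β) • C x ω - x‖ ^ 2 ∂μ ≤ (1 - α / β ^ 2) * ‖x‖ ^ 2 := by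
  intro x
  obtain ⟨h1, h2⟩ := hB x
  have hinner : Integrable (fun ω => (inner ℝ (C x ω) x : ℝ)) μ := by
    exact ((innerSL ℝ (E := EuclideanSpace ℝ (Fin d))).flip x).integrable_comp (hintC x)
  have hexp : ∀ ω, ‖(1 / β) • C x ω - x‖ ^ 2
      = (1 / β) ^ 2 * ‖C x ω‖ ^ 2 - 2 * (1 / β) * (inner ℝ (C x ω) x : ℝ) + ‖x‖ ^ 2 := by
    intro ω
    rw [norm_sub_sq_real, norm_smul, real_inner_smul_left]
    simp [mul_pow]
    ring
  rw [integral_congr_ae (Filter.Eventually.of_forall hexp)]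
  have hint1 : Integrable (fun ω => (1 / β) ^ 2 * ‖C x ω‖ ^ 2) μ := (hintC2 x).const_mul _
  have hint2 : Integrable (fun ω => 2 * (1 / β) * (inner ℝ (C x ω) x : ℝ)) μ := hinner.const_mul _
  have hint3 : Integrable (fun ω => (1 / β) ^ 2 * ‖C x ω‖ ^ 2 - 2 * (1 / β) * (inner ℝ (C x ω) x : ℝ)) μ := hint1.sub hint2
  rw [integral_add hint3 (integrable_const _), integral_sub hint1 hint2,
    integral_const_mul, integral_const_mul, integral_const]
  have hEint : ∫ ω, (inner ℝ (C x ω) x : ℝ) ∂μ = (inner ℝ (∫ ω, C x ω ∂μ) x : ℝ) := by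
    calc ∫ ω, (inner ℝ (C x ω) x : ℝ) ∂μ = ∫ ω, (inner ℝ x (C x ω) : ℝ) ∂μ :=
          integral_congr_ae (Filter.Eventually.of_forall fun ω => real_inner_comm _ _)
      _ = (inner ℝ x (∫ ω, C x ω ∂μ) : ℝ) := integral_inner (hintC x) x
      _ = (inner ℝ (∫ ω, C x ω ∂μ) x : ℝ) := real_inner_comm _ _
  rw [hEint]
  simp only [probReal_univ, measure_univ, ENNReal.toReal_one, smul_eq_mul, one_mul]
  have hβ2 : (0:ℝ) < β ^ 2 := by positivity
  set I := ∫ ω, ‖C x ω‖ ^ 2 ∂μ with hI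
  set J := (inner ℝ (∫ ω, C x ω ∂μ) x : ℝ) with hJ
  have h3 : I / β ≤ J := by
    rw [div_le_iff₀ hβ]; linarith
  have key : 2 * (1 / β) * (I / β) ≤ 2 * (1 / β) * J :=
    mul_le_mul_of_nonneg_left h3 (by positivity)
  have e1 : (1 / β) ^ 2 * I = I / β ^ 2 := by field_simp
  have e2 : 2 * (1 / β) * (I / β) = 2 * (I / β ^ 2) := by rw [sq]; ring
  have h4 : α * ‖x‖ ^ 2 / β ^ 2 ≤ I / β ^ 2 := by gcongr
  have e3 : (1 - α / β ^ 2) * ‖x‖ ^ 2 = ‖x‖ ^ 2 - α * ‖x‖ ^ 2 / β ^ 2 := by ring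
  linarith
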